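/- Under the Hölder-type bound on the first derivatives of W (with W ≥ 0), the first-order partial derivative ∂_{x₁} c_w(t,s;x,y) of c_w(t,s;x,y) = exp(-ρ∫₀¹ W(t-θρ, x-θ(x-y))dθ) is uniformly bounded: there is a constant C such that |∂_{x₁}c_w(t,s;x,y)| ≤ C for all 0 ≤ s ≤ t ≤ T and (x,y) ∈ ℝ^{2d}. -/

import Mathlib

/-- Partial derivative in the `i`-th coordinate direction. -/
noncomputable def pd {d : ℕ} (i : Fin d) (f : EuclideanSpace ℝ (Fin d) → ℝ) :
    EuclideanSpace ℝ (Fin d) → ℝ :=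
  fun x => fderiv ℝ f x (EuclideanSpace.single i 1)

set_option maxHeartbeats 1000000 in
theorem stmt4 (d : ℕ) (hd : 0 < d) (T : ℝ) (hT : 0 < T)
    (W : ℝ → EuclideanSpace ℝ (Fin d) → ℝ)
    (hWcont : Continuous fun p : ℝ × EuclideanSpace ℝ (Fin d) => W p.1 p.2)
    (hWdiff : ∀ t, ContDiff ℝ 1 (W t))
    (hWnonneg : ∀ t ∈ Set.Icc (0:ℝ) T, ∀ x, 0 ≤ W t x)
    (C₁ p : ℝ) (hC₁ : 0 ≤ C₁) (hp : 1 < p)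
    (hbound : ∀ t ∈ Set.Icc (0:ℝ) T, ∀ x,
      |pd ⟨0, hd⟩ (W t) x| ^ p ≤ C₁ * (1 + W t x))
    (c_w : ℝ → ℝ → EuclideanSpace ℝ (Fin d) → EuclideanSpace ℝ (Fin d) → ℝ)
    (hc : ∀ t s x y, c_w t s x y =
      Real.exp (-(t - s) * ∫ θ in (0:ℝ)..1, W (t - θ * (t - s)) (x - θ • (x - y)))) :
    ∃ C : ℝ, ∀ s t : ℝ, 0 ≤ s → s ≤ t → t ≤ T →
      ∀ x y : EuclideanSpace ℝ (Fin d),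
        |pd ⟨0, hd⟩ (fun x' => c_w t s x' y) x| ≤ C := by
  classical
  have hp0 : (0:ℝ) < p := lt_trans one_pos hp
  have hKnn : (0:ℝ) ≤ C₁ ^ (1/p) := Real.rpow_nonneg hC₁ _
  refine ⟨C₁ ^ (1/p) * (T + 1), ?_⟩
  intro s t hs hst htT x y
  set e : EuclideanSpace ℝ (Fin d) := EuclideanSpace.single ⟨0, hd⟩ 1 with he
  have hCnn : (0:ℝ) ≤ C₁ ^ (1/p) * (T + 1) := mul_nonneg hKnn (by linarith)
  show |fderiv ℝ (fun x' => c_w t s x' y) x e| ≤ _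
  by_cases hdf : DifferentiableAt ℝ (fun x' => c_w t s x' y) x
  swap
  · rw [fderiv_zero_of_not_differentiableAt hdf]
    simpa using hCnn
  set ρ := t - s with hρdef
  have hρ0 : 0 ≤ ρ := by rw [hρdef]; linarith
  have hρT : ρ ≤ T := by rw [hρdef]; linarith
  have hmem : ∀ θ : ℝ, 0 ≤ θ → θ ≤ 1 → t - θ * ρ ∈ Set.Icc (0:ℝ) T := by
    intro θ h0 h1
    constructor
    · nlinarith
    · nlinarith
  set F : ℝ → ℝ → ℝ :=
    fun u θ => W (t - θ * ρ) ((x + u • e) - θ • ((x + u • e) - y)) with hF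
  set F' : ℝ → ℝ → ℝ :=
    fun u θ => (1 - θ) *
      fderiv ℝ (W (t - θ * ρ)) ((x + u • e) - θ • ((x + u • e) - y)) e with hF'
  -- joint continuity
  have hcont2 : Continuous fun q : ℝ × ℝ => F q.1 q.2 := by
    rw [hF]
    have hmap : Continuous (fun q : ℝ × ℝ =>
        ((t - q.2 * ρ, (x + q.1 • e) - q.2 • ((x + q.1 • e) - y)) :
          ℝ × EuclideanSpace ℝ (Fin d))) := by fun_prop
    exact hWcont.comp hmap
  have hcontFu : ∀ u, Continuous (F u) := fun u =>
    hcont2.comp (Continuous.prodMk_right u)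
  -- derivative of the integrand
  have hφder : ∀ (θ u : ℝ),
      HasDerivAt (fun u : ℝ => (x + u • e) - θ • ((x + u • e) - y)) (e - θ • e) u := by
    intro θ u
    have h1 : HasDerivAt (fun u : ℝ => x + u • e) e u := by
      simpa using ((hasDerivAt_id u).smul_const e).const_add x
    exact h1.sub ((h1.sub_const y).const_smul θ)
  have hFder : ∀ (θ u : ℝ), HasDerivAt (fun u => F u θ) (F' u θ) u := by
    intro θ u
    have hW : HasFDerivAt (W (t - θ * ρ))
        (fderiv ℝ (W (t - θ * ρ)) ((x + u • e) - θ • ((x + u • e) - y)))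
        ((x + u • e) - θ • ((x + u • e) - y)) :=
      (((hWdiff _).differentiable one_ne_zero) _).hasFDerivAt
    have h4 := hW.comp_hasDerivAt u (hφder θ u)
    have h5 : fderiv ℝ (W (t - θ * ρ)) ((x + u • e) - θ • ((x + u • e) - y)) (e - θ • e)
        = F' u θ := by
      rw [map_sub, map_smul, smul_eq_mul, hF']
      ring
    rw [h5] at h4
    exact h4
  -- pointwise bound on the directional derivative
  have hDbound : ∀ θ : ℝ, t - θ * ρ ∈ Set.Icc (0:ℝ) T →
      ∀ z, |fderiv ℝ (W (t - θ * ρ)) z e| ≤ (C₁ * (1 + W (t - θ * ρ) z)) ^ (1/p) := by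
    intro θ hθ z
    have hb := hbound _ hθ z
    have h1 : |fderiv ℝ (W (t - θ * ρ)) z e|
        = (|fderiv ℝ (W (t - θ * ρ)) z e| ^ p) ^ (1/p) := by
      rw [← Real.rpow_mul (abs_nonneg _), mul_one_div_cancel (ne_of_gt hp0), Real.rpow_one]
    rw [h1]
    exact Real.rpow_le_rpow (by positivity) hb (by positivity)
  -- compact bound for W along the relevant segment
  obtain ⟨q₀, hq₀S, hq₀⟩ :=
    (isCompact_Icc.prod isCompact_Icc :
      IsCompact ((Set.Icc (0:ℝ) 1) ×ˢ (Set.Icc (-1:ℝ) 1))).exists_isMaxOn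
      ⟨(0, 0), Set.mk_mem_prod (by norm_num) (by norm_num)⟩
      ((hcont2.comp continuous_swap).continuousOn :
        ContinuousOn (fun q : ℝ × ℝ => F q.2 q.1) _)
  set M : ℝ := F q₀.2 q₀.1 with hM
  -- measurability of F' 0
  have hF'0meas : MeasureTheory.AEStronglyMeasurable (F' 0)
      (MeasureTheory.volume.restrict (Set.uIoc (0:ℝ) 1)) := by
    set seq : ℕ → ℝ → ℝ := fun n θ => (1 - θ) *
      ((W (t - θ * ρ) (((x + (0:ℝ) • e) - θ • ((x + (0:ℝ) • e) - y)) + (1/((n:ℝ)+1)) • e)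
        - W (t - θ * ρ) (((x + (0:ℝ) • e) - θ • ((x + (0:ℝ) • e) - y)) + (0:ℝ) • e))
        / (1/((n:ℝ)+1))) with hseq
    have hseqcont : ∀ n, Continuous (seq n) := by
      intro n
      rw [hseq]
      apply Continuous.mul (by fun_prop)
      apply Continuous.div_const
      apply Continuous.sub
      · have hmap : Continuous (fun θ : ℝ =>
            ((t - θ * ρ, ((x + (0:ℝ) • e) - θ • ((x + (0:ℝ) • e) - y)) + (1/((n:ℝ)+1)) • e) :
              ℝ × EuclideanSpace ℝ (Fin d))) := by fun_prop
        exact hWcont.comp hmap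
      · have hmap : Continuous (fun θ : ℝ =>
            ((t - θ * ρ, ((x + (0:ℝ) • e) - θ • ((x + (0:ℝ) • e) - y)) + (0:ℝ) • e) :
              ℝ × EuclideanSpace ℝ (Fin d))) := by fun_prop
        exact hWcont.comp hmap
    have htend : ∀ θ : ℝ, Filter.Tendsto (fun n => seq n θ) Filter.atTop (nhds (F' 0 θ)) := by
      intro θ
      set z := (x + (0:ℝ) • e) - θ • ((x + (0:ℝ) • e) - y) with hz
      have hdir : HasDerivAt (fun h : ℝ => W (t - θ * ρ) (z + h • e))
          (fderiv ℝ (W (t - θ * ρ)) z e) 0 := by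
        have hl : HasDerivAt (fun h : ℝ => z + h • e) e 0 := by
          simpa using ((hasDerivAt_id (0:ℝ)).smul_const e).const_add z
        have hW : HasFDerivAt (W (t - θ * ρ)) (fderiv ℝ (W (t - θ * ρ)) z)
            (z + (0:ℝ) • e) := by
          rw [zero_smul, add_zero]
          exact (((hWdiff _).differentiable one_ne_zero) _).hasFDerivAt
        exact hW.comp_hasDerivAt 0 hl
      rw [hasDerivAt_iff_tendsto_slope] at hdir
      have hns : Filter.Tendsto (fun n : ℕ => 1/((n:ℝ)+1)) Filter.atTop
          (nhdsWithin 0 {(0:ℝ)}ᶜ) := by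
        apply tendsto_nhdsWithin_of_tendsto_nhds_of_eventually_within
        · exact tendsto_one_div_add_atTop_nhds_zero_nat
        · filter_upwards with n
          simp only [Set.mem_compl_iff, Set.mem_singleton_iff]
          positivity
      have h6 := (hdir.comp hns).const_mul (1 - θ)
      have h7 : ∀ n : ℕ, (1 - θ) * slope (fun h : ℝ => W (t - θ * ρ) (z + h • e)) 0
          (1/((n:ℝ)+1)) = seq n θ := by
        intro n
        rw [slope_def_field, hseq]
        simp [hz]
      refine Filter.Tendsto.congr (fun n => h7 n) ?_
      simpa [hF', hz, Function.comp] using h6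
    exact (stronglyMeasurable_of_tendsto Filter.atTop
      (fun n => (hseqcont n).stronglyMeasurable)
      (tendsto_pi_nhds.2 htend)).aestronglyMeasurable
  -- differentiation under the integral sign
  obtain ⟨hFint', hder⟩ := intervalIntegral.hasDerivAt_integral_of_dominated_loc_of_deriv_le
    (F := F) (F' := F') (x₀ := (0:ℝ)) (a := 0) (b := 1)
    (bound := fun _ => (C₁ * (1 + M)) ^ (1/p)) (Metric.ball_mem_nhds 0 one_pos)
    (Filter.Eventually.of_forall fun u => (hcontFu u).aestronglyMeasurable)
    ((hcontFu 0).intervalIntegrable 0 1)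
    hF'0meas
    (by
      refine MeasureTheory.ae_of_all _ fun θ hθ u hu => ?_
      rw [Set.uIoc_of_le zero_le_one] at hθ
      have hθ0 : 0 ≤ θ := le_of_lt hθ.1
      have hθ1 : θ ≤ 1 := hθ.2
      have hu' : u ∈ Set.Icc (-1:ℝ) 1 := by
        have := mem_ball_zero_iff.1 hu
        rw [Real.norm_eq_abs] at this
        exact abs_le.1 this.le
      have htm := hmem θ hθ0 hθ1
      have hWn : 0 ≤ W (t - θ * ρ) ((x + u • e) - θ • ((x + u • e) - y)) :=
        hWnonneg _ htm _
      have hle : F u θ ≤ M := hq₀ (Set.mk_mem_prod ⟨hθ0, hθ1⟩ hu')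
      have h1 : ‖F' u θ‖ ≤
          |fderiv ℝ (W (t - θ * ρ)) ((x + u • e) - θ • ((x + u • e) - y)) e| := by
        rw [hF', Real.norm_eq_abs, abs_mul]
        have : |1 - θ| ≤ 1 := abs_le.2 ⟨by linarith, by linarith⟩
        nlinarith [abs_nonneg (fderiv ℝ (W (t - θ * ρ))
          ((x + u • e) - θ • ((x + u • e) - y)) e)]
      refine h1.trans ((hDbound θ htm _).trans ?_)
      apply Real.rpow_le_rpow (by positivity) ?_ (by positivity)
      have : F u θ = W (t - θ * ρ) ((x + u • e) - θ • ((x + u • e) - y)) := by rw [hF]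
      nlinarith [hle]
      )
    intervalIntegrable_const
    (MeasureTheory.ae_of_all _ fun θ _ u _ => hFder θ u)
  -- identify the derivative of u ↦ c_w t s (x+u•e) y
  set I' : ℝ := ∫ θ in (0:ℝ)..1, F 0 θ with hIdef
  set B : ℝ := ∫ θ in (0:ℝ)..1, F' 0 θ with hBdef
  have hexp : HasDerivAt (fun u => Real.exp (-ρ * ∫ θ in (0:ℝ)..1, F u θ))
      (Real.exp (-ρ * I') * (-ρ * B)) 0 := (hder.const_mul (-ρ)).exp
  have hEq : (fun u : ℝ => c_w t s (x + u • e) y)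
      = fun u => Real.exp (-ρ * ∫ θ in (0:ℝ)..1, F u θ) := by
    funext u
    rw [hc t s (x + u • e) y, hF]
  have h10 : HasDerivAt (fun u : ℝ => x + u • e) e 0 := by
    simpa using ((hasDerivAt_id (0:ℝ)).smul_const e).const_add x
  have hfd : HasFDerivAt (fun x' => c_w t s x' y)
      (fderiv ℝ (fun x' => c_w t s x' y) x) (x + (0:ℝ) • e) := by
    rw [zero_smul, add_zero]
    exact hdf.hasFDerivAt
  have hline : HasDerivAt (fun u : ℝ => c_w t s (x + u • e) y)
      (fderiv ℝ (fun x' => c_w t s x' y) x e) 0 := by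
    have h11 := hfd.comp_hasDerivAt (0:ℝ) h10
    exact h11
  have hkey : fderiv ℝ (fun x' => c_w t s x' y) x e
      = Real.exp (-ρ * I') * (-ρ * B) := by
    refine hline.unique ?_
    rw [hEq]
    exact hexp
  -- estimates
  have hI0 : 0 ≤ I' := by
    rw [hIdef]
    refine intervalIntegral.integral_nonneg zero_le_one fun θ hθ => ?_
    exact hWnonneg _ (hmem θ hθ.1 hθ.2) _
  have habs : |B| ≤ ∫ θ in (0:ℝ)..1, |F' 0 θ| := by
    rw [hBdef]
    exact intervalIntegral.abs_integral_le_integral_abs zero_le_one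
  have hmono : (∫ θ in (0:ℝ)..1, |F' 0 θ|)
      ≤ ∫ θ in (0:ℝ)..1, C₁ ^ (1/p) * (1 + F 0 θ) := by
    refine intervalIntegral.integral_mono_on zero_le_one hFint'.abs
      ((continuous_const.mul (continuous_const.add (hcontFu 0))).intervalIntegrable 0 1)
      fun θ hθ => ?_
    have htm := hmem θ hθ.1 hθ.2
    have hWn : 0 ≤ W (t - θ * ρ) ((x + (0:ℝ) • e) - θ • ((x + (0:ℝ) • e) - y)) :=
      hWnonneg _ htm _
    have hWF : F 0 θ = W (t - θ * ρ) ((x + (0:ℝ) • e) - θ • ((x + (0:ℝ) • e) - y)) := by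
      rw [hF]
    have h1 : |1 - θ| ≤ 1 := abs_le.2 ⟨by linarith [hθ.2], by linarith [hθ.1]⟩
    have hD := hDbound θ htm ((x + (0:ℝ) • e) - θ • ((x + (0:ℝ) • e) - y))
    have h2 : (C₁ * (1 + F 0 θ)) ^ (1/p) = C₁ ^ (1/p) * (1 + F 0 θ) ^ (1/p) :=
      Real.mul_rpow hC₁ (by rw [hWF]; linarith)
    have h3 : (1 + F 0 θ) ^ (1/p) ≤ 1 + F 0 θ := by
      calc (1 + F 0 θ) ^ (1/p) ≤ (1 + F 0 θ) ^ (1:ℝ) := by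
            apply Real.rpow_le_rpow_of_exponent_le (by rw [hWF]; linarith)
            rw [div_le_one hp0]; linarith
        _ = 1 + F 0 θ := Real.rpow_one _
    calc |F' 0 θ| = |1 - θ| *
          |fderiv ℝ (W (t - θ * ρ)) ((x + (0:ℝ) • e) - θ • ((x + (0:ℝ) • e) - y)) e| := by
            rw [hF', abs_mul]
      _ ≤ 1 * |fderiv ℝ (W (t - θ * ρ)) ((x + (0:ℝ) • e) - θ • ((x + (0:ℝ) • e) - y)) e| :=
            mul_le_mul_of_nonneg_right h1 (abs_nonneg _)
      _ = |fderiv ℝ (W (t - θ * ρ)) ((x + (0:ℝ) • e) - θ • ((x + (0:ℝ) • e) - y)) e| :=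
            one_mul _
      _ ≤ (C₁ * (1 + W (t - θ * ρ) ((x + (0:ℝ) • e) - θ • ((x + (0:ℝ) • e) - y)))) ^ (1/p) := hD
      _ = (C₁ * (1 + F 0 θ)) ^ (1/p) := by rw [hWF]
      _ = C₁ ^ (1/p) * (1 + F 0 θ) ^ (1/p) := h2
      _ ≤ C₁ ^ (1/p) * (1 + F 0 θ) := mul_le_mul_of_nonneg_left h3 hKnn
  have hval : (∫ θ in (0:ℝ)..1, C₁ ^ (1/p) * (1 + F 0 θ)) = C₁ ^ (1/p) * (1 + I') := by
    rw [intervalIntegral.integral_const_mul,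
      intervalIntegral.integral_add intervalIntegrable_const
        ((hcontFu 0).intervalIntegrable 0 1)]
    simp [hIdef]
  have hB2 : |B| ≤ C₁ ^ (1/p) * (1 + I') := habs.trans (hmono.trans_eq hval)
  rw [hkey]
  have hIB : |Real.exp (-ρ * I') * (-ρ * B)| = Real.exp (-ρ * I') * (ρ * |B|) := by
    rw [abs_mul, abs_of_pos (Real.exp_pos _), abs_mul, abs_neg, abs_of_nonneg hρ0]
  rw [hIB]
  set E := Real.exp (-ρ * I') with hE
  have hE0 : 0 < E := Real.exp_pos _
  have e1 : E ≤ 1 := by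
    rw [hE, Real.exp_le_one_iff]
    nlinarith
  have e2 : ρ * I' ≤ Real.exp (ρ * I') := by
    nlinarith [Real.add_one_le_exp (ρ * I')]
  have e3 : E * Real.exp (ρ * I') = 1 := by
    rw [hE, ← Real.exp_add]
    norm_num
  have hBB : (ρ * I') * E ≤ 1 := by
    calc (ρ * I') * E ≤ Real.exp (ρ * I') * E :=
          mul_le_mul_of_nonneg_right e2 hE0.le
      _ = 1 := by rw [mul_comm]; exact e3
  have key2 : E * (ρ * (C₁ ^ (1/p) * (1 + I'))) ≤ C₁ ^ (1/p) * (T + 1) := by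
    have hA : ρ * E ≤ T := by nlinarith
    have : E * (ρ * (C₁ ^ (1/p) * (1 + I')))
        = C₁ ^ (1/p) * (ρ * E + (ρ * I') * E) := by ring
    rw [this]
    apply mul_le_mul_of_nonneg_left ?_ hKnn
    linarith
  calc E * (ρ * |B|) ≤ E * (ρ * (C₁ ^ (1/p) * (1 + I'))) := by
        apply mul_le_mul_of_nonneg_left ?_ hE0.le
        exact mul_le_mul_of_nonneg_left hB2 hρ0
    _ ≤ C₁ ^ (1/p) * (T + 1) := key2
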